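/- The square formed by the inclusions X ↪ X ∪ {a}, Y ↪ Y ∪ {b}, and the maps f : X → Y, g : X ∪ {a} → Y ∪ {b} (with g↾X = f, g(a) = b) is a pushout in the category of metric spaces with non-expansive maps: for any non-expansive maps p : X ∪ {a} → W and q : Y → W with p↾X = q ∘ f, there is a unique non-expansive h : Y ∪ {b} → W with h↾Y = q and h(b) = p(a). -/
import Mathlib


/-- The metric of the one-point extension `X ∪ {a}` (encoded as `Option X`). -/
noncomputable def extDistX {X : Type} [MetricSpace X] (dA : X → ℝ) :
    Option X → Option X → ℝ
  | some x, some x' => dist x x'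
  | some x, none => dA x
  | none, some x => dA x
  | none, none => 0

/-- The distance on `Y ∪ {b}` given by `d(y,b) = min_{x ∈ X} (d(y,f(x)) + d(x,a))`. -/
noncomputable def extDist {X Y : Type} [MetricSpace X] [Fintype X] [Nonempty X]
    [MetricSpace Y] (f : X → Y) (dA : X → ℝ) : Option Y → Option Y → ℝ
  | some y, some y' => dist y y'
  | some y, none => Finset.univ.inf' Finset.univ_nonempty fun x => dist y (f x) + dA x
  | none, some y => Finset.univ.inf' Finset.univ_nonempty fun x => dist y (f x) + dA x
  | none, none => 0

/-- the square formed by the inclusions `X ↪ X ∪ {a}`, `Y ↪ Y ∪ {b}`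
and the maps `f : X → Y`, `g = Option.map f : X ∪ {a} → Y ∪ {b}` is a pushout in
the category of metric spaces with non-expansive maps: for any metric space `W`,
any non-expansive `p : X ∪ {a} → W` and `q : Y → W` with `p↾X = q ∘ f`, there is a
unique non-expansive `h : Y ∪ {b} → W` with `h↾Y = q` and `h(b) = p(a)`. -/
theorem stmt2 {X Y W : Type} [MetricSpace X] [Fintype X] [Nonempty X] [MetricSpace Y]
    [MetricSpace W]
    (f : X → Y) (hf : ∀ p q : X, dist (f p) (f q) ≤ dist p q)
    (dA : X → ℝ) (hpos : ∀ x, 0 < dA x)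
    (htri1 : ∀ x x' : X, dist x x' ≤ dA x + dA x')
    (htri2 : ∀ x x' : X, dA x ≤ dist x x' + dA x')
    (p : Option X → W) (hp : ∀ u v : Option X, dist (p u) (p v) ≤ extDistX dA u v)
    (q : Y → W) (hq : ∀ y y' : Y, dist (q y) (q y') ≤ dist y y')
    (hcomm : ∀ x : X, p (some x) = q (f x)) :
    ∃! h : Option Y → W, (∀ y : Y, h (some y) = q y) ∧ h none = p none ∧
      ∀ u v : Option Y, dist (h u) (h v) ≤ extDist f dA u v := by
  refine ⟨fun u => u.elim (p none) q, ⟨fun y => rfl, rfl, ?_⟩, ?_⟩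
  · have key : ∀ (y : Y) (x : X), dist (p none) (q y) ≤ dist y (f x) + dA x := by
      intro y x
      calc dist (p none) (q y) ≤ dist (p none) (q (f x)) + dist (q (f x)) (q y) :=
            dist_triangle _ _ _
        _ ≤ dist y (f x) + dA x := by
            have h1 : dist (p none) (q (f x)) ≤ dA x := by
              rw [← hcomm x, dist_comm]; exact hp (some x) none
            have h2 : dist (q (f x)) (q y) ≤ dist y (f x) := by
              rw [dist_comm y]; exact hq _ _
            linarith
    rintro (_|y) (_|y') <;> simp [extDist]
    · exact key y'
    · exact fun x => (dist_comm (q y) (p none)).trans_le (key y x)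
    · exact hq y y'
  · rintro h ⟨h1, h2, -⟩
    funext u
    cases u with
    | none => exact h2
    | some y => exact h1 y
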